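/- Let f : ℝⁿ → ℝ be a convex, continuously differentiable function, let 𝔠 = {x ∈ ℝⁿ : f(x) ≤ 0}, suppose there exists x̂ ∈ ℝⁿ with f(x̂) < 0 (Slater's condition), and let 𝒜 : ℝⁿ → ℝⁿ. Then for x* ∈ 𝔠, x* ∈ VI(𝔠, 𝒜) if and only if either 𝒜(x*) = 0, or f(x*) = 0 (i.e., x* lies on the boundary of 𝔠) and there exists η > 0 such that 𝒜(x*) = −η∇f(x*). -/

import Mathlib

open InnerProductSpace Set

variable {n : ℕ}

lemma grad_ineq {n : ℕ} (f : EuclideanSpace ℝ (Fin n) → ℝ)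
    (hconv : ConvexOn ℝ Set.univ f) (hf : ContDiff ℝ 1 f)
    (x y : EuclideanSpace ℝ (Fin n)) :
    (inner ℝ (gradient f x) (y - x) : ℝ) ≤ f y - f x := by
  set v := y - x with hv
  have hdiff : DifferentiableAt ℝ f x :=
    (hf.differentiable one_ne_zero).differentiableAt
  have hfd : HasFDerivAt f (toDual ℝ _ (gradient f x)) x := hdiff.hasGradientAt.hasFDerivAt
  have hline : HasDerivAt (fun s : ℝ => x + s • v) v 0 := by
    simpa using ((hasDerivAt_id (0:ℝ)).smul_const v).const_add x
  have hφ : HasDerivAt (fun s : ℝ => f (x + s • v)) ((inner ℝ (gradient f x) v : ℝ)) 0 := by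
    have hfd' : HasFDerivAt f (toDual ℝ _ (gradient f x)) (x + (0:ℝ) • v) := by
      simpa using hfd
    have := hfd'.comp_hasDerivAt 0 hline
    exact this
  have hφconv : ConvexOn ℝ Set.univ (fun s : ℝ => f (x + s • v)) := by
    have haff : ConvexOn ℝ ((AffineMap.lineMap x y : ℝ →ᵃ[ℝ] _) ⁻¹' Set.univ)
        (f ∘ (AffineMap.lineMap x y : ℝ →ᵃ[ℝ] _)) := hconv.comp_affineMap _
    have heq : (fun s : ℝ => f (x + s • v)) = f ∘ (AffineMap.lineMap x y : ℝ →ᵃ[ℝ] _) := by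
      funext s
      simp [Function.comp, AffineMap.lineMap_apply, hv]
      rw [add_comm]
    rw [heq]
    simpa using haff
  have := hφconv.le_slope_of_hasDerivAt (Set.mem_univ 0) (Set.mem_univ 1) one_pos hφ
  simp [slope_def_field, hv] at this
  simpa [hv] using this

lemma descent {n : ℕ} (f : EuclideanSpace ℝ (Fin n) → ℝ) (hf : ContDiff ℝ 1 f)
    (x d : EuclideanSpace ℝ (Fin n)) (hd : (inner ℝ (gradient f x) d : ℝ) < 0)
    (hx0 : f x = 0) : ∃ t : ℝ, 0 < t ∧ f (x + t • d) < 0 := by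
  have hdiff : DifferentiableAt ℝ f x :=
    (hf.differentiable one_ne_zero).differentiableAt
  have hfd : HasFDerivAt f (toDual ℝ _ (gradient f x)) x := hdiff.hasGradientAt.hasFDerivAt
  have hline : HasDerivAt (fun s : ℝ => x + s • d) d 0 := by
    simpa using ((hasDerivAt_id (0:ℝ)).smul_const d).const_add x
  have hφ : HasDerivAt (fun s : ℝ => f (x + s • d)) ((inner ℝ (gradient f x) d : ℝ)) 0 := by
    have hfd' : HasFDerivAt f (toDual ℝ _ (gradient f x)) (x + (0:ℝ) • d) := by
      simpa using hfd
    have := hfd'.comp_hasDerivAt 0 hline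
    exact this
  have hslope := hasDerivAt_iff_tendsto_slope.mp hφ
  have hev : ∀ᶠ t in nhdsWithin (0:ℝ) {(0:ℝ)}ᶜ,
      slope (fun s : ℝ => f (x + s • d)) 0 t < 0 :=
    hslope.eventually_lt_const hd
  have hev' : ∀ᶠ t in nhdsWithin (0:ℝ) (Set.Ioi 0),
      slope (fun s : ℝ => f (x + s • d)) 0 t < 0 :=
    hev.filter_mono (nhdsWithin_mono 0 (fun t ht => ne_of_gt ht))
  obtain ⟨t, ht, htpos⟩ := (hev'.and self_mem_nhdsWithin).exists
  refine ⟨t, htpos, ?_⟩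
  have key : t⁻¹ * (f (x + t • d) - f x) < 0 := by
    simpa [slope_def_field, slope] using ht
  by_contra h
  push_neg at h
  have : 0 ≤ t⁻¹ * (f (x + t • d) - f x) :=
    mul_nonneg (inv_pos.mpr htpos).le (by rw [hx0]; linarith)
  linarith

set_option maxHeartbeats 1000000 in
theorem stmt_14 {n : ℕ} (f : EuclideanSpace ℝ (Fin n) → ℝ)
    (hconv : ConvexOn ℝ Set.univ f) (hf : ContDiff ℝ 1 f)
    (C : Set (EuclideanSpace ℝ (Fin n)))
    (hC : C = {z : EuclideanSpace ℝ (Fin n) | f z ≤ 0})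
    (hslater : ∃ xhat : EuclideanSpace ℝ (Fin n), f xhat < 0)
    (A : EuclideanSpace ℝ (Fin n) → EuclideanSpace ℝ (Fin n))
    (xs : EuclideanSpace ℝ (Fin n)) (hxs : xs ∈ C) :
    ((∀ z ∈ C, (0 : ℝ) ≤ inner ℝ (A xs) (z - xs)) ↔
      (A xs = 0 ∨ (f xs = 0 ∧ ∃ η : ℝ, 0 < η ∧ A xs = -η • gradient f xs))) := by
  subst hC
  set g := gradient f xs with hg
  set a := A xs with ha
  constructor
  · intro hVI
    by_cases hA : a = 0
    · exact Or.inl hA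
    right
    -- Step 1 : f xs = 0
    have hfxs : f xs = 0 := by
      have hle : f xs ≤ 0 := hxs
      rcases lt_or_eq_of_le hle with hlt | heq
      · exfalso
        have hopen : IsOpen {y : EuclideanSpace ℝ (Fin n) | f y < 0} :=
          isOpen_Iio.preimage (hf.continuous)
        obtain ⟨ε, hε, hball⟩ := Metric.isOpen_iff.mp hopen xs hlt
        have hApos : (0:ℝ) < ‖a‖ := norm_pos_iff.mpr hA
        set δ : ℝ := ε / (2 * (‖a‖ + 1)) with hδ
        have hδpos : 0 < δ := by positivity
        set z := xs - δ • a with hz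
        have hzmem : z ∈ Metric.ball xs ε := by
          rw [Metric.mem_ball, dist_eq_norm]
          have : z - xs = -(δ • a) := by rw [hz]; abel
          rw [hz]
          have : ‖xs - δ • a - xs‖ = δ * ‖a‖ := by
            rw [show xs - δ • a - xs = -(δ • a) by abel, norm_neg, norm_smul,
              Real.norm_eq_abs, abs_of_pos hδpos]
          rw [this, hδ]
          rw [div_mul_eq_mul_div, div_lt_iff₀ (by positivity)]
          nlinarith
        have hzC : f z ≤ 0 := le_of_lt (hball hzmem)
        have := hVI z hzC
        have hzs : z - xs = -(δ • a) := by rw [hz]; abel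
        rw [hzs] at this
        rw [inner_neg_right, real_inner_smul_right, real_inner_self_eq_norm_sq] at this
        nlinarith [mul_pos hδpos (mul_pos hApos hApos)]
      · exact heq
    refine ⟨hfxs, ?_⟩
    obtain ⟨xh, hxh⟩ := hslater
    set v := xh - xs with hv
    have hs : (inner ℝ g v : ℝ) < 0 := by
      have h2 := grad_ineq f hconv hf xs xh
      rw [hfxs, ← hv, ← hg] at h2
      linarith
    -- key claim
    have claim1 : ∀ d : EuclideanSpace ℝ (Fin n), (inner ℝ g d : ℝ) < 0 → 0 ≤ (inner ℝ a d : ℝ) := by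
      intro d hd
      obtain ⟨t, htpos, hft⟩ := descent f hf xs d hd hfxs
      have := hVI (xs + t • d) (le_of_lt hft)
      rw [show xs + t • d - xs = t • d by abel, real_inner_smul_right] at this
      nlinarith
    have claim2 : ∀ d : EuclideanSpace ℝ (Fin n), (inner ℝ g d : ℝ) ≤ 0 → 0 ≤ (inner ℝ a d : ℝ) := by
      intro d hd
      by_contra hcon
      push_neg at hcon
      set b := (inner ℝ a d : ℝ) with hb
      set c := (inner ℝ a v : ℝ) with hc
      set ε : ℝ := -b / (2 * (|c| + 1)) with hε
      have hεpos : 0 < ε := by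
        rw [hε]
        apply div_pos (by linarith) (by positivity)
      have hgd : (inner ℝ g (d + ε • v) : ℝ) < 0 := by
        rw [inner_add_right, real_inner_smul_right]
        nlinarith
      have h1 := claim1 _ hgd
      rw [inner_add_right, real_inner_smul_right, ← hb, ← hc] at h1
      have hcabs : c ≤ |c| := le_abs_self c
      have hcabs' : 0 ≤ |c| := abs_nonneg c
      have : ε * c ≤ ε * |c| := by nlinarith
      have hεabs : ε * |c| ≤ -b / 2 := by
        rw [hε]
        rw [div_mul_eq_mul_div, div_le_div_iff₀ (by positivity) (by norm_num)]
        nlinarith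
      linarith
    have claim3 : ∀ d : EuclideanSpace ℝ (Fin n), (inner ℝ g d : ℝ) = 0 → (inner ℝ a d : ℝ) = 0 := by
      intro d hd
      have h1 := claim2 d (le_of_eq hd)
      have h2 := claim2 (-d) (by rw [inner_neg_right, hd, neg_zero])
      rw [inner_neg_right] at h2
      linarith
    have hgne : g ≠ 0 := by
      intro h0
      rw [h0, inner_zero_left] at hs
      exact lt_irrefl _ hs
    have hgnorm : (0:ℝ) < ‖g‖ ^ 2 := pow_pos (norm_pos_iff.mpr hgne) 2
    set c : ℝ := (inner ℝ a g : ℝ) / ‖g‖ ^ 2 with hcdef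
    set w := a - c • g with hw
    have hgw : (inner ℝ g w : ℝ) = 0 := by
      rw [hw, inner_sub_right, real_inner_smul_right, real_inner_self_eq_norm_sq, hcdef,
        real_inner_comm]
      field_simp
      ring
    have haw : (inner ℝ a w : ℝ) = 0 := claim3 w hgw
    have hwzero : w = 0 := by
      have : (inner ℝ w w : ℝ) = 0 := by
        rw [hw]
        rw [inner_sub_left, real_inner_smul_left]
        rw [show (inner ℝ a (a - c • g) : ℝ) = inner ℝ a w by rw [hw],
          show (inner ℝ g (a - c • g) : ℝ) = inner ℝ g w by rw [hw], haw, hgw]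
        ring
      exact inner_self_eq_zero.mp this
    have hacg : a = c • g := by
      rw [hw, sub_eq_zero] at hwzero
      exact hwzero
    have hag : (inner ℝ a g : ℝ) ≤ 0 := by
      have hgg : (inner ℝ g (-g) : ℝ) < 0 := by
        rw [inner_neg_right, real_inner_self_eq_norm_sq]
        linarith
      have := claim1 (-g) hgg
      rw [inner_neg_right] at this
      linarith
    have hcle : c ≤ 0 := div_nonpos_of_nonpos_of_nonneg hag (pow_nonneg (norm_nonneg g) 2)
    have hcne : c ≠ 0 := by
      intro h0
      rw [h0, zero_smul] at hacg
      exact hA hacg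
    have hclt : c < 0 := lt_of_le_of_ne hcle hcne
    refine ⟨-c, by linarith, ?_⟩
    rw [hacg, neg_neg]
  · rintro (hA | ⟨hfxs, η, hηpos, hAeq⟩)
    · intro z hz
      simp [hA]
    · intro z hz
      rw [hAeq, real_inner_smul_left]
      have hgi := grad_ineq f hconv hf xs z
      rw [hfxs, ← hg] at hgi
      have hz' : f z ≤ 0 := hz
      nlinarith
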